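/- Fix μ > 1. For every T > 0, the function x ↦ (μ/(μ²+1))·log( (a₊/(8μ³yc₋))·[ (μ²+1)c₋a₊e^{2T} + μ⁴y(1+x) + μ(1+μ²)(y²-x²+1) - 6μ²y + y(1-x) ] ), restricted to the segment y = μ^{-1}(1+x), x ∈ [0, (μ²-1)/(μ²+1)), where a₊ = μy + 1 - x and c₋ = μ(1-x) - y, attains its minimum at x* = (e^T - 1)(μ²-1)/(e^T(μ²+1) + μ²-1), and the minimum value equals (2μ/(μ²+1))·log( (e^T(μ²+1) + μ²-1)/(2μ²) ). -/

import Mathlib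

/-- The Bellman function `B_II(-T, x, y)` of the length-minimization problem,
restricted to the lower-right boundary segment `y = μ⁻¹ (1 + x)`. -/
noncomputable def Gfun (μ T x : ℝ) : ℝ :=
  let y := μ⁻¹ * (1 + x)
  (μ / (μ ^ 2 + 1)) *
    Real.log ((μ * y + 1 - x) / (8 * μ ^ 3 * y * (μ * (1 - x) - y)) *
      ((μ ^ 2 + 1) * (μ * (1 - x) - y) * (μ * y + 1 - x) * Real.exp (2 * T) +
        μ ^ 4 * y * (1 + x) + μ * (1 + μ ^ 2) * (y ^ 2 - x ^ 2 + 1) -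
        6 * μ ^ 2 * y + y * (1 - x)))

theorem stmt17 (μ : ℝ) (hμ : 1 < μ) (T : ℝ) (hT : 0 < T)
    (xstar : ℝ)
    (hxstar : xstar = (Real.exp T - 1) * (μ ^ 2 - 1) /
      (Real.exp T * (μ ^ 2 + 1) + μ ^ 2 - 1)) :
    xstar ∈ Set.Ico (0 : ℝ) ((μ ^ 2 - 1) / (μ ^ 2 + 1)) ∧
    (∀ x ∈ Set.Ico (0 : ℝ) ((μ ^ 2 - 1) / (μ ^ 2 + 1)), Gfun μ T xstar ≤ Gfun μ T x) ∧
    Gfun μ T xstar = (2 * μ / (μ ^ 2 + 1)) *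
      Real.log ((Real.exp T * (μ ^ 2 + 1) + μ ^ 2 - 1) / (2 * μ ^ 2)) := by
  have hμ0 : (0:ℝ) < μ := lt_trans one_pos hμ
  have hμ2 : (0:ℝ) < μ ^ 2 := by positivity
  have hd : (0:ℝ) < μ ^ 2 - 1 := by nlinarith
  have hs : (0:ℝ) < μ ^ 2 + 1 := by positivity
  have hE : 1 < Real.exp T := by
    simpa using Real.exp_lt_exp.mpr hT
  set E := Real.exp T with hEdef
  have hden : 0 < E * (μ ^ 2 + 1) + μ ^ 2 - 1 := by nlinarith
  have hx0 : 0 ≤ xstar := by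
    rw [hxstar]
    exact div_nonneg (by nlinarith) hden.le
  have hx1 : xstar < (μ ^ 2 - 1) / (μ ^ 2 + 1) := by
    rw [hxstar, div_lt_div_iff₀ hden hs]
    nlinarith [mul_pos hd hμ2]
  -- rewrite Gfun on the segment
  have key : ∀ x : ℝ, 0 ≤ x → x < (μ ^ 2 - 1) / (μ ^ 2 + 1) →
      Gfun μ T x = (μ / (μ ^ 2 + 1)) * Real.log
        (((μ ^ 2 + 1) * (μ ^ 2 - 1 - (μ ^ 2 + 1) * x) * E ^ 2 + (μ ^ 2 - 1) ^ 2 * (1 + x)) /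
          (2 * μ ^ 2 * (1 + x) * (μ ^ 2 - 1 - (μ ^ 2 + 1) * x))) := by
    intro x hx0' hx1'
    have hβ : 0 < μ ^ 2 - 1 - (μ ^ 2 + 1) * x := by
      have := (lt_div_iff₀ hs).mp hx1'
      linarith
    have h1x : (0:ℝ) < 1 + x := by linarith
    have hexp : Real.exp (2 * T) = E ^ 2 := by
      rw [two_mul, Real.exp_add, hEdef]; ring
    have hc : μ * (1 - x) - μ⁻¹ * (1 + x) = (μ ^ 2 - 1 - (μ ^ 2 + 1) * x) / μ := by
      field_simp; ring
    have hcne : μ * (1 - x) - μ⁻¹ * (1 + x) ≠ 0 := by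
      rw [hc]; positivity
    show (μ / (μ ^ 2 + 1)) * Real.log ((μ * (μ⁻¹ * (1 + x)) + 1 - x) /
        (8 * μ ^ 3 * (μ⁻¹ * (1 + x)) * (μ * (1 - x) - μ⁻¹ * (1 + x))) *
        ((μ ^ 2 + 1) * (μ * (1 - x) - μ⁻¹ * (1 + x)) * (μ * (μ⁻¹ * (1 + x)) + 1 - x) *
            Real.exp (2 * T) +
          μ ^ 4 * (μ⁻¹ * (1 + x)) * (1 + x) +
          μ * (1 + μ ^ 2) * ((μ⁻¹ * (1 + x)) ^ 2 - x ^ 2 + 1) -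
          6 * μ ^ 2 * (μ⁻¹ * (1 + x)) + (μ⁻¹ * (1 + x)) * (1 - x))) = _
    congr 2
    rw [hexp, hc]
    field_simp
    ring
  have h1xs : 1 + xstar = 2 * E * μ ^ 2 / (E * (μ ^ 2 + 1) + μ ^ 2 - 1) := by
    rw [hxstar]; field_simp; ring
  have hβs : μ ^ 2 - 1 - (μ ^ 2 + 1) * xstar =
      2 * (μ ^ 2 - 1) * μ ^ 2 / (E * (μ ^ 2 + 1) + μ ^ 2 - 1) := by
    rw [hxstar, mul_div_assoc', eq_div_iff hden.ne', sub_mul, div_mul_cancel₀ _ hden.ne']; ring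
  have hval : ((μ ^ 2 + 1) * (μ ^ 2 - 1 - (μ ^ 2 + 1) * xstar) * E ^ 2 +
      (μ ^ 2 - 1) ^ 2 * (1 + xstar)) /
      (2 * μ ^ 2 * (1 + xstar) * (μ ^ 2 - 1 - (μ ^ 2 + 1) * xstar)) =
      ((E * (μ ^ 2 + 1) + μ ^ 2 - 1) / (2 * μ ^ 2)) ^ 2 := by
    rw [h1xs, hβs]
    have hE0 : (0:ℝ) < E := lt_trans one_pos hE
    field_simp
    ring
  refine ⟨⟨hx0, hx1⟩, ?_, ?_⟩
  · intro x hx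
    obtain ⟨hx0', hx1'⟩ := hx
    have hβ : 0 < μ ^ 2 - 1 - (μ ^ 2 + 1) * x := by
      have := (lt_div_iff₀ hs).mp hx1'
      linarith
    have h1x : (0:ℝ) < 1 + x := by linarith
    rw [key xstar hx0 hx1, key x hx0' hx1', hval]
    have hD : 0 < 2 * μ ^ 2 * (1 + x) * (μ ^ 2 - 1 - (μ ^ 2 + 1) * x) := by positivity
    have hN : 0 < (μ ^ 2 + 1) * (μ ^ 2 - 1 - (μ ^ 2 + 1) * x) * E ^ 2 +
        (μ ^ 2 - 1) ^ 2 * (1 + x) := by positivity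
    apply mul_le_mul_of_nonneg_left _ (le_of_lt (div_pos hμ0 hs))
    apply Real.log_le_log (by positivity)
    rw [div_pow, div_le_div_iff₀ (by positivity) hD]
    nlinarith [mul_nonneg (mul_nonneg (by positivity : (0:ℝ) ≤ 2 * μ ^ 2) hs.le)
      (sq_nonneg ((E * (μ ^ 2 + 1) + μ ^ 2 - 1) * x - (E - 1) * (μ ^ 2 - 1)))]
  · rw [key xstar hx0 hx1, hval, Real.log_pow]
    push_cast
    ring
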